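/- Let β > 0, L ≥ 0, σ_k, σ_{k+1}, ε_k, ε_{k+1} ≥ 0, S ⊆ ℝⁿ, F : ℝⁿ → ℝⁿ, g : ℝⁿ → ℝ, and let x_k, x_{k+1}, y_{k−1}, y_k, y_{k+1}, λ_{k−1}, q_k, q_{k+1}, r_k, r_{k+1} ∈ ℝⁿ with x_k + q_k, x_{k+1} + q_{k+1} ∈ S. Set λ_k := λ_{k−1} + β(x_k − y_k) and λ_{k+1} := λ_k + β(x_{k+1} − y_{k+1}). Assume: (a) ‖q_k‖ ≤ σ_k, ‖q_{k+1}‖ ≤ σ_{k+1}, ‖r_k‖ ≤ √(2ε_k/β), ‖r_{k+1}‖ ≤ √(2ε_{k+1}/β); (b) −λ_{k−1} − β(x_k − y_{k−1}) − βq_k is a subgradient of x ↦ ⟨F(x_k), x⟩ at x_k + q_k relative to S, and −λ_k − β(x_{k+1} − y_k) − βq_{k+1} is a subgradient of x ↦ ⟨F(x_{k+1}), x⟩ at x_{k+1} + q_{k+1} relative to S; (c) λ_k − βr_k is an ε_k-subgradient of g at y_k and λ_{k+1} − βr_{k+1} is an ε_{k+1}-subgradient of g at y_{k+1}; (d) ⟨F(x_{k+1})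 − F(x_k), x_{k+1} − x_k⟩ ≥ 0 and ‖F(x_{k+1}) − F(x_k)‖ ≤ L‖x_{k+1} − x_k‖. Then (1/(2β))‖λ_{k+1} − λ_k‖² + (β/2)‖y_{k+1} − y_k‖² ≤ (1/(2β))‖λ_k − λ_{k−1}‖² + (β/2)‖y_k − y_{k−1}‖² + (σ_{k+1} + σ_k)·( β‖y_k − y_{k−1}‖ + (2β + L)‖y_{k+1} − y_k‖ + (2 + L/β)‖λ_{k+1} − λ_k‖ + (L/β + 1)‖λ_k − λ_{k−1}‖ ) + √(2β)(√ε_k + √ε_{k+1})‖y_{k+1} − y_k‖ + ε_k + ε_{k+1}. -/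

import Mathlib

set_option maxHeartbeats 1000000
open scoped RealInnerProductSpace

private lemma ip_le' {E : Type*} [NormedAddCommGroup E] [InnerProductSpace ℝ E]
    (c s : ℝ) (hc : 0 ≤ c) (x y : E) (hs : ‖y‖ ≤ s) :
    c * ⟪x, y⟫ ≤ c * (‖x‖ * s) := by
  have h1 := abs_real_inner_le_norm x y
  have h2 : ‖x‖ * ‖y‖ ≤ ‖x‖ * s := mul_le_mul_of_nonneg_left hs (norm_nonneg x)
  have h3 : ⟪x, y⟫ ≤ ‖x‖ * s := le_trans (le_trans (le_abs_self _) h1) h2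
  exact mul_le_mul_of_nonneg_left h3 hc

private lemma ip_ge' {E : Type*} [NormedAddCommGroup E] [InnerProductSpace ℝ E]
    (c s : ℝ) (hc : 0 ≤ c) (x y : E) (hs : ‖y‖ ≤ s) :
    -(c * (‖x‖ * s)) ≤ c * ⟪x, y⟫ := by
  have h1 := abs_real_inner_le_norm x y
  have h2 : ‖x‖ * ‖y‖ ≤ ‖x‖ * s := mul_le_mul_of_nonneg_left hs (norm_nonneg x)
  have h3 : -(‖x‖ * s) ≤ ⟪x, y⟫ := by
    have h4 := neg_abs_le ⟪x, y⟫; linarith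
  have h5 := mul_le_mul_of_nonneg_left h3 hc
  linarith

private lemma scal1 (β x y : ℝ) (hβ : β ≠ 0) :
    β * ((1/(2*β)) * x + (β/2) * y) = x/2 + β^2*y/2 := by
  field_simp

private lemma scal2 (β L σ s e1 e2 nb nv ma mb mu mv mu2 : ℝ) (hβ : β ≠ 0) :
    β * ((1/(2*β)) * nb + (β/2) * nv
        + σ * (β * mv + (2*β + L) * mu + (2 + L/β) * ma + (L/β + 1) * mb)
        + s * mu2 + e1 + e2)
      = nb/2 + β^2*nv/2
        + σ * (β^2 * mv + (2*β^2 + L*β) * mu + (2*β + L) * ma + (L + β) * mb)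
        + β * (s * mu2) + β*e1 + β*e2 := by
  field_simp

/-- Lemma 3.7 for inexact ACVI: approximate non-increment of
the per-step quantity along two consecutive inexact ACVI steps. -/
theorem stmt16 {n : ℕ} (β L σk σk1 εk εk1 : ℝ)
    (hβ : 0 < β) (hL : 0 ≤ L) (hσk : 0 ≤ σk) (hσk1 : 0 ≤ σk1)
    (hεk : 0 ≤ εk) (hεk1 : 0 ≤ εk1)
    (S : Set (EuclideanSpace ℝ (Fin n)))
    (F : EuclideanSpace ℝ (Fin n) → EuclideanSpace ℝ (Fin n))
    (g : EuclideanSpace ℝ (Fin n) → ℝ)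
    (xk xk1 ykm1 yk yk1 lamkm1 lamk lamk1 qk qk1 rk rk1 : EuclideanSpace ℝ (Fin n))
    (hxkS : xk + qk ∈ S) (hxk1S : xk1 + qk1 ∈ S)
    (hlamk : lamk = lamkm1 + β • (xk - yk))
    (hlamk1 : lamk1 = lamk + β • (xk1 - yk1))
    (hqk : ‖qk‖ ≤ σk) (hqk1 : ‖qk1‖ ≤ σk1)
    (hrk : ‖rk‖ ≤ Real.sqrt (2*εk/β)) (hrk1 : ‖rk1‖ ≤ Real.sqrt (2*εk1/β))
    (hfsubk : ∀ z ∈ S,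
      ⟪F xk, z⟫ ≥ ⟪F xk, xk + qk⟫
        + ⟪-lamkm1 - β • (xk - ykm1) - β • qk, z - (xk + qk)⟫)
    (hfsubk1 : ∀ z ∈ S,
      ⟪F xk1, z⟫ ≥ ⟪F xk1, xk1 + qk1⟫
        + ⟪-lamk - β • (xk1 - yk) - β • qk1, z - (xk1 + qk1)⟫)
    (hgk : ∀ z, g z ≥ g yk + ⟪lamk - β • rk, z - yk⟫ - εk)
    (hgk1 : ∀ z, g z ≥ g yk1 + ⟪lamk1 - β • rk1, z - yk1⟫ - εk1)
    (hmono : 0 ≤ ⟪F xk1 - F xk, xk1 - xk⟫)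
    (hlip : ‖F xk1 - F xk‖ ≤ L * ‖xk1 - xk‖) :
    (1/(2*β)) * ‖lamk1 - lamk‖^2 + (β/2) * ‖yk1 - yk‖^2
      ≤ (1/(2*β)) * ‖lamk - lamkm1‖^2 + (β/2) * ‖yk - ykm1‖^2
        + (σk1 + σk) * (β * ‖yk - ykm1‖ + (2*β + L) * ‖yk1 - yk‖
            + (2 + L/β) * ‖lamk1 - lamk‖ + (L/β + 1) * ‖lamk - lamkm1‖)
        + Real.sqrt (2*β) * (Real.sqrt εk + Real.sqrt εk1) * ‖yk1 - yk‖
        + εk + εk1 := by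
  have hβ' : (0:ℝ) ≤ β := hβ.le
  set a := lamk1 - lamk with ha0
  set b := lamk - lamkm1 with hb0
  set u := yk1 - yk with hu0
  set v := yk - ykm1 with hv0
  set q := qk1 - qk with hq0
  have hq' : ‖q‖ ≤ σk1 + σk := by
    rw [hq0]; exact le_trans (norm_sub_le _ _) (add_le_add hqk1 hqk)
  -- Lipschitz/monotone control of the error term
  have hDFq : -(L * ‖xk1 - xk‖ * (σk1 + σk)) ≤ ⟪F xk1 - F xk, qk1 - qk⟫ := by
    have h1 := abs_real_inner_le_norm (F xk1 - F xk) (qk1 - qk)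
    have h2 : ‖qk1 - qk‖ ≤ σk1 + σk := le_trans (norm_sub_le _ _) (add_le_add hqk1 hqk)
    have h3 : ‖F xk1 - F xk‖ * ‖qk1 - qk‖ ≤ (L * ‖xk1 - xk‖) * (σk1 + σk) :=
      mul_le_mul hlip h2 (norm_nonneg _) (by positivity)
    have h4 := neg_abs_le ⟪F xk1 - F xk, qk1 - qk⟫
    nlinarith
  -- combined x-step inequality
  have hvec1 : a + β • u - β • v + β • q
      = (lamk + β • (xk1 - yk) + β • qk1) - (lamkm1 + β • (xk - ykm1) + β • qk) := by
    rw [ha0, hu0, hv0, hq0, hlamk1, hlamk]; module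
  have hx0 : ⟪a + β • u - β • v + β • q, (xk1 + qk1) - (xk + qk)⟫
      ≤ L * ‖xk1 - xk‖ * (σk1 + σk) := by
    rw [hvec1]
    have h1 := hfsubk1 (xk + qk) hxkS
    have h2 := hfsubk (xk1 + qk1) hxk1S
    simp only [inner_add_left, inner_add_right, inner_sub_left, inner_sub_right,
      inner_neg_left, inner_neg_right, real_inner_smul_left, real_inner_smul_right]
      at h1 h2 hmono hDFq ⊢
    linarith
  have hbD : β • ((xk1 + qk1) - (xk + qk)) = (a - b) + β • u + β • q := by
    rw [ha0, hb0, hu0, hq0, hlamk1, hlamk]; module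
  have hx : ⟪a + β • u - β • v + β • q, (a - b) + β • u + β • q⟫
      ≤ β * (L * ‖xk1 - xk‖ * (σk1 + σk)) := by
    rw [← hbD, real_inner_smul_right]
    exact mul_le_mul_of_nonneg_left hx0 hβ'
  -- g-step inequality
  have h7 : β * ⟪rk1 - rk, u⟫ - (εk + εk1) ≤ ⟪a, u⟫ := by
    have hg1 := hgk yk1
    have hg2 := hgk1 yk
    rw [ha0, hu0]
    simp only [inner_add_left, inner_add_right, inner_sub_left, inner_sub_right,
      inner_neg_left, inner_neg_right, real_inner_smul_left, real_inner_smul_right]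
      at hg1 hg2 ⊢
    linarith
  -- sqrt computations
  have hsq : ∀ ε : ℝ, 0 ≤ ε → β * Real.sqrt (2*ε/β) = Real.sqrt (2*β) * Real.sqrt ε := by
    intro ε hε
    have hnn : (0:ℝ) ≤ 2*ε/β := div_nonneg (by linarith) hβ'
    have h1 : Real.sqrt (2*β) * Real.sqrt ε = Real.sqrt ((2*β) * ε) :=
      (Real.sqrt_mul (by positivity) ε).symm
    have h2 : (2*β)*ε = (2*ε/β) * β^2 := by field_simp
    rw [h1, h2, Real.sqrt_mul hnn, Real.sqrt_sq hβ']
    ring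
  have hbrk : β * ‖rk‖ ≤ Real.sqrt (2*β) * Real.sqrt εk := by
    rw [← hsq εk hεk]; exact mul_le_mul_of_nonneg_left hrk hβ'
  have hbrk1 : β * ‖rk1‖ ≤ Real.sqrt (2*β) * Real.sqrt εk1 := by
    rw [← hsq εk1 hεk1]; exact mul_le_mul_of_nonneg_left hrk1 hβ'
  -- I4 : lower bound on β * ⟪a, u⟫
  have h8 : -((‖rk1‖ + ‖rk‖) * ‖u‖) ≤ ⟪rk1 - rk, u⟫ := by
    have h1 := abs_real_inner_le_norm (rk1 - rk) u
    have h2 := norm_sub_le rk1 rk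
    have h3 := neg_abs_le ⟪rk1 - rk, u⟫
    nlinarith [norm_nonneg u]
  have I4 : -(β * (Real.sqrt (2*β) * (Real.sqrt εk + Real.sqrt εk1) * ‖u‖))
      - (β*εk + β*εk1) ≤ β * ⟪a, u⟫ := by
    have s1 := mul_le_mul_of_nonneg_left h7 hβ'
    have s2 := mul_le_mul_of_nonneg_left h8 hβ'
    have s3 := mul_le_mul_of_nonneg_left s2 hβ'
    have s4 : (β*‖rk1‖ + β*‖rk‖) * ‖u‖
        ≤ (Real.sqrt (2*β) * Real.sqrt εk1 + Real.sqrt (2*β) * Real.sqrt εk) * ‖u‖ :=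
      mul_le_mul_of_nonneg_right (add_le_add hbrk1 hbrk) (norm_nonneg u)
    have s5 := mul_le_mul_of_nonneg_left s4 hβ'
    linarith [s1, s3, s5]
  -- I1, I2 : norm identities
  have I1 : ⟪a, a⟫ - ⟪a, b⟫ = ‖a‖^2/2 - ‖b‖^2/2 + ‖a-b‖^2/2 := by
    have h1 := norm_sub_sq_real a b
    have h2 := real_inner_self_eq_norm_sq a
    linarith
  have I2' : ⟪u, u⟫ - ⟪v, u⟫ = ‖u‖^2/2 - ‖v‖^2/2 + ‖u-v‖^2/2 := by
    have h1 := norm_sub_sq_real u v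
    have h2 := real_inner_self_eq_norm_sq u
    have h3 := real_inner_comm v u
    linarith
  have I2 : β^2 * ⟪u, u⟫ - β^2 * ⟪v, u⟫ = β^2*(‖u‖^2/2 - ‖v‖^2/2 + ‖u-v‖^2/2) := by
    linear_combination β^2 * I2'
  -- I3 : cross term
  have ecs : -(‖u - v‖ * ‖a - b‖) ≤ ⟪u - v, a - b⟫ := by
    have h1 := abs_real_inner_le_norm (u - v) (a - b)
    have h2 := neg_abs_le ⟪u - v, a - b⟫
    linarith
  have ecsβ := mul_le_mul_of_nonneg_left ecs hβ'
  have eexp : β * ⟪u - v, a - b⟫ = β*⟪u,a⟫ - β*⟪u,b⟫ - β*⟪v,a⟫ + β*⟪v,b⟫ := by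
    simp only [inner_sub_left, inner_sub_right]; ring
  have I3 : -((β^2*‖u-v‖^2 + ‖a-b‖^2)/2)
      ≤ β*⟪u,a⟫ - β*⟪u,b⟫ - β*⟪v,a⟫ + β*⟪v,b⟫ := by
    nlinarith [ecsβ, eexp, sq_nonneg (β*‖u-v‖ - ‖a-b‖)]
  -- IR : right-hand side control
  have hbX : β • (xk1 - xk) = (a - b) + β • u := by
    rw [ha0, hb0, hu0, hlamk1, hlamk]; module
  have hXn : β * ‖xk1 - xk‖ ≤ ‖a‖ + ‖b‖ + β*‖u‖ := by
    have h1 : ‖β • (xk1 - xk)‖ = β * ‖xk1 - xk‖ := by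
      rw [norm_smul, Real.norm_eq_abs, abs_of_pos hβ]
    have h2 : ‖(a - b) + β • u‖ ≤ ‖a - b‖ + ‖β • u‖ := norm_add_le _ _
    have h3 : ‖a - b‖ ≤ ‖a‖ + ‖b‖ := norm_sub_le _ _
    have h4 : ‖β • u‖ = β * ‖u‖ := by
      rw [norm_smul, Real.norm_eq_abs, abs_of_pos hβ]
    rw [← h1, hbX]
    linarith
  have IR : β * (L * ‖xk1 - xk‖ * (σk1 + σk))
      ≤ L*(σk1+σk)*‖a‖ + L*(σk1+σk)*‖b‖ + L*(σk1+σk)*(β*‖u‖) := by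
    have h5 : (0:ℝ) ≤ L * (σk1+σk) := by positivity
    nlinarith [mul_le_mul_of_nonneg_left hXn h5]
  -- q-error bounds
  have Iq1 := ip_ge' β (σk1+σk) hβ' a q hq'
  have Iq2 := ip_ge' (β^2) (σk1+σk) (sq_nonneg β) u q hq'
  have Iq3 := ip_le' (β^2) (σk1+σk) (sq_nonneg β) v q hq'
  have Iq5 := ip_le' β (σk1+σk) hβ' b q hq'
  have Iq7 : (0:ℝ) ≤ β^2 * ⟪q, q⟫ := mul_nonneg (sq_nonneg β) real_inner_self_nonneg
  have e_qa : β * ⟪q, a⟫ = β * ⟪a, q⟫ := by rw [real_inner_comm q a]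
  have e_qb : β * ⟪q, b⟫ = β * ⟪b, q⟫ := by rw [real_inner_comm q b]
  have e_qu : β^2 * ⟪q, u⟫ = β^2 * ⟪u, q⟫ := by rw [real_inner_comm q u]
  -- assemble the scaled key inequality
  have key : β * ((1/(2*β)) * ‖a‖^2 + (β/2) * ‖u‖^2)
      ≤ β * ((1/(2*β)) * ‖b‖^2 + (β/2) * ‖v‖^2
        + (σk1 + σk) * (β * ‖v‖ + (2*β + L) * ‖u‖
            + (2 + L/β) * ‖a‖ + (L/β + 1) * ‖b‖)
        + Real.sqrt (2*β) * (Real.sqrt εk + Real.sqrt εk1) * ‖u‖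
        + εk + εk1) := by
    have hβne : β ≠ 0 := ne_of_gt hβ
    have e1 : β * ((1/(2*β)) * ‖a‖^2 + (β/2) * ‖u‖^2)
        = ‖a‖^2/2 + β^2*‖u‖^2/2 := scal1 β (‖a‖^2) (‖u‖^2) hβne
    have e2 : β * ((1/(2*β)) * ‖b‖^2 + (β/2) * ‖v‖^2
        + (σk1 + σk) * (β * ‖v‖ + (2*β + L) * ‖u‖
            + (2 + L/β) * ‖a‖ + (L/β + 1) * ‖b‖)
        + Real.sqrt (2*β) * (Real.sqrt εk + Real.sqrt εk1) * ‖u‖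
        + εk + εk1)
        = ‖b‖^2/2 + β^2*‖v‖^2/2
        + (σk1 + σk) * (β^2 * ‖v‖ + (2*β^2 + L*β) * ‖u‖
            + (2*β + L) * ‖a‖ + (L + β) * ‖b‖)
        + β * (Real.sqrt (2*β) * (Real.sqrt εk + Real.sqrt εk1) * ‖u‖)
        + β*εk + β*εk1 :=
      scal2 β L (σk1+σk) (Real.sqrt (2*β) * (Real.sqrt εk + Real.sqrt εk1)) εk εk1
        (‖b‖^2) (‖v‖^2) ‖a‖ ‖b‖ ‖u‖ ‖v‖ ‖u‖ hβne
    rw [e1, e2]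
    simp only [inner_add_left, inner_add_right, inner_sub_left, inner_sub_right,
      inner_neg_left, inner_neg_right, real_inner_smul_left, real_inner_smul_right] at hx
    linarith [hx, I1, I2, I3, I4, IR, Iq1, Iq2, Iq3, Iq5, Iq7, e_qa, e_qb, e_qu]
  exact le_of_mul_le_mul_left key hβ
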